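/- Every connected multigraph (possibly with loops, multi-edges, and vertices of any degree ≥ 1) can be obtained from some connected 3-regular loopless multigraph with edges labelled 'real' or 'virtual' by contracting all virtual non-loop edges (identifying their endpoints) and deleting all virtual loops. Equivalently, the reduction map from labelled 3-regular loopless graphs to arbitrary connected multigraphs is surjective. -/

import Mathlib

/-- A multigraph: finite vertex and edge types, each edge carrying an unordered pair of
endpoints.  Loops and multi-edges are allowed. -/
structure Multigraph where
  V : Type
  E : Type
  [fV : Finite V]
  [fE : Finite E]
  ends : E → Sym2 V

attribute [instance] Multigraph.fV Multigraph.fE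

/-- The underlying adjacency (simple) graph of a multigraph. -/
def Multigraph.adjGraph (G : Multigraph) : SimpleGraph G.V where
  Adj u v := u ≠ v ∧ ∃ e, G.ends e = s(u, v)
  symm := by
    constructor
    rintro u v ⟨huv, e, he⟩
    exact ⟨huv.symm, e, he.trans Sym2.eq_swap⟩
  loopless := by
    constructor
    rintro u ⟨h, -⟩
    exact h rfl

/-- Connectedness of a multigraph. -/
def Multigraph.Connected (G : Multigraph) : Prop := G.adjGraph.Connected

/-- A multigraph is loopless if no edge joins a vertex to itself. -/
def Multigraph.Loopless (G : Multigraph) : Prop := ∀ e : G.E, ¬ (G.ends e).IsDiag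

/-- A loopless multigraph is `k`-regular if every vertex is incident to exactly `k` edges. -/
def Multigraph.IsRegular (G : Multigraph) (k : ℕ) : Prop :=
  ∀ v : G.V, Nat.card {e : G.E // v ∈ G.ends e} = k

/-- Isomorphism of multigraphs. -/
structure Multigraph.Iso (G H : Multigraph) where
  vEquiv : G.V ≃ H.V
  eEquiv : G.E ≃ H.E
  ends_map : ∀ e, H.ends (eEquiv e) = Sym2.map vEquiv (G.ends e)

/-- A labelled multigraph: each edge is marked `real` (`true`) or `virtual` (`false`). -/
structure LabelledMultigraph where
  toMultigraph : Multigraph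
  real : toMultigraph.E → Bool

/-- Two vertices are related if some virtual edge joins them. -/
def LabelledMultigraph.virtualRel (H : LabelledMultigraph) (v w : H.toMultigraph.V) : Prop :=
  ∃ e, H.real e = false ∧ H.toMultigraph.ends e = s(v, w)

/-- **The reduction map** `π`: contract all virtual non-loop edges (identify their endpoints)
and delete all virtual loops.  Equivalently: quotient the vertex set by the equivalence
generated by the virtual edges and keep only the real edges. -/
def LabelledMultigraph.reduce (H : LabelledMultigraph) : Multigraph where
  V := Quot H.virtualRel
  E := {e : H.toMultigraph.E // H.real e = true}
  ends := fun e => Sym2.map (Quot.mk H.virtualRel) (H.toMultigraph.ends e.1)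

namespace Stmt4Aux

variable (G : Multigraph)

lemma sym2_exists_rep {α : Type*} (s : Sym2 α) : ∃ p : α × α, Sym2.mk p.1 p.2 = s :=
  Sym2.ind (fun a b => ⟨(a, b), rfl⟩) s

noncomputable def ep (e : G.E) : G.V × G.V := (sym2_exists_rep (G.ends e)).choose

lemma ep_spec (e : G.E) : Sym2.mk (ep G e).1 (ep G e).2 = G.ends e := (sym2_exists_rep (G.ends e)).choose_spec

def Dart := G.E × Bool

instance : Finite (Dart G) := by unfold Dart; infer_instance

attribute [reducible] Dart

noncomputable def dv (d : Dart G) : G.V := if d.2 then (ep G d.1).2 else (ep G d.1).1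

lemma ends_eq_darts (e : G.E) : s(dv G (e, false), dv G (e, true)) = G.ends e := by
  simpa [dv] using ep_spec G e

def Fib (v : G.V) := {d : Dart G // dv G d = v}

instance (v : G.V) : Finite (Fib G v) := by unfold Fib; infer_instance

noncomputable instance (v : G.V) : Fintype (Fib G v) := Fintype.ofFinite _

noncomputable def nn (v : G.V) : ℕ := Fintype.card (Fib G v)

noncomputable def σ (v : G.V) : Fib G v ≃ Fin (nn G v) := Fintype.equivFin _

def HV := Σ v : G.V, Fin (nn G v + 2)

instance : Finite (HV G) := by unfold HV; infer_instance

attribute [reducible] HV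

def HE := HV G ⊕ G.V ⊕ G.E

instance : Finite (HE G) := by unfold HE; infer_instance

attribute [reducible] HE

noncomputable def attach (d : Dart G) : HV G :=
  ⟨dv G d, Fin.castAdd 2 (σ G (dv G d) ⟨d, rfl⟩)⟩

noncomputable def hends : HE G → Sym2 (HV G)
  | .inl ⟨v, i⟩ => s((⟨v, i⟩ : HV G), ⟨v, i + 1⟩)
  | .inr (.inl v) => s((⟨v, ⟨nn G v, by omega⟩⟩ : HV G), ⟨v, ⟨nn G v + 1, by omega⟩⟩)
  | .inr (.inr e) => s(attach G (e, false), attach G (e, true))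

def hreal : HE G → Bool
  | .inr (.inr _) => true
  | _ => false

lemma fin_one_ne_zero (m : ℕ) : (1 : Fin (m + 2)) ≠ 0 := by
  intro h
  have := congrArg Fin.val h
  simp at this

lemma fin_ne_add_one {m : ℕ} (i : Fin (m + 2)) : i ≠ i + 1 := by
  intro h
  have : (1 : Fin (m + 2)) = 0 := by
    have h2 : i + 1 = i + 0 := by simpa using h.symm
    exact add_left_cancel h2
  exact fin_one_ne_zero m this

lemma fin_sub_one_ne {m : ℕ} (i : Fin (m + 2)) : i - 1 ≠ i := by
  intro h
  have h2 : i - 1 + 1 = i + 1 := congrArg (· + 1) h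
  rw [sub_add_cancel] at h2
  exact fin_ne_add_one i h2

lemma fin_mk_add_one {m : ℕ} (k : ℕ) (h : k + 1 < m + 2) :
    (⟨k, by omega⟩ : Fin (m + 2)) + 1 = ⟨k + 1, h⟩ := by
  apply Fin.ext
  simp [Fin.add_def, Nat.mod_eq_of_lt h]

lemma sigma_fst {v w : G.V} {i : Fin (nn G v + 2)} {j : Fin (nn G w + 2)}
    (h : (⟨v, i⟩ : HV G) = ⟨w, j⟩) : v = w := congrArg Sigma.fst h

lemma sigma_snd {v : G.V} {i j : Fin (nn G v + 2)}
    (h : (⟨v, i⟩ : HV G) = ⟨v, j⟩) : i = j := by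
  simpa using h

lemma attach_eq_iff (d : Dart G) (v : G.V) (i : Fin (nn G v + 2)) :
    attach G d = ⟨v, i⟩ ↔ ∃ h : dv G d = v, Fin.castAdd 2 (σ G v ⟨d, h⟩) = i := by
  constructor
  · intro h
    have h1 : dv G d = v := congrArg Sigma.fst h
    subst h1
    exact ⟨rfl, sigma_snd G h⟩
  · rintro ⟨h, h2⟩
    subst h
    exact congrArg (Sigma.mk (dv G d)) h2

lemma attach_injective : Function.Injective (attach G) := by
  intro d d' h
  rw [show attach G d' = ⟨dv G d', Fin.castAdd 2 (σ G (dv G d') ⟨d', rfl⟩)⟩ from rfl,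
    attach_eq_iff] at h
  obtain ⟨h1, h2⟩ := h
  have h3 : (σ G (dv G d') ⟨d, h1⟩) = (σ G (dv G d') ⟨d', rfl⟩) := by
    apply Fin.ext
    have := congrArg Fin.val h2
    simpa using this
  have := (σ G (dv G d')).injective h3
  exact congrArg Subtype.val this

end Stmt4Aux
namespace Stmt4Aux

variable (G : Multigraph)

noncomputable def HH : LabelledMultigraph :=
  ⟨⟨HV G, HE G, hends G⟩, hreal G⟩

attribute [reducible] HH

lemma HH_loopless : (HH G).toMultigraph.Loopless := by
  rintro (⟨v, i⟩ | w | e) h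
  · rw [show (HH G).toMultigraph.ends (.inl ⟨v, i⟩) = s((⟨v, i⟩ : HV G), ⟨v, i + 1⟩) from rfl,
      Sym2.mk_isDiag_iff] at h
    exact fin_ne_add_one i (sigma_snd G h)
  · rw [show (HH G).toMultigraph.ends (.inr (.inl w)) =
      s((⟨w, ⟨nn G w, by omega⟩⟩ : HV G), ⟨w, ⟨nn G w + 1, by omega⟩⟩) from rfl,
      Sym2.mk_isDiag_iff] at h
    have := congrArg Fin.val (sigma_snd G h)
    simp at this
  · rw [show (HH G).toMultigraph.ends (.inr (.inr e)) =
      s(attach G (e, false), attach G (e, true)) from rfl, Sym2.mk_isDiag_iff] at h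
    have := attach_injective G h
    simpa using congrArg Prod.snd this

lemma vrel_step (v : G.V) (j : Fin (nn G v + 2)) :
    (HH G).virtualRel ⟨v, j⟩ ⟨v, j + 1⟩ := ⟨.inl ⟨v, j⟩, rfl, rfl⟩

lemma quot_mk_eq_zero (v : G.V) (i : Fin (nn G v + 2)) :
    Quot.mk (HH G).virtualRel ⟨v, i⟩ = Quot.mk (HH G).virtualRel ⟨v, 0⟩ := by
  obtain ⟨k, hk⟩ := i
  induction k with
  | zero => rfl
  | succ k ih =>
    have hk' : k < nn G v + 2 := by omega
    have h1 : Quot.mk (HH G).virtualRel (⟨v, ⟨k, hk'⟩⟩ : HV G) =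
        Quot.mk (HH G).virtualRel ⟨v, ⟨k + 1, hk⟩⟩ := by
      have := Quot.sound (vrel_step G v ⟨k, hk'⟩)
      rwa [fin_mk_add_one k hk] at this
    rw [← h1, ih]

end Stmt4Aux
namespace Stmt4Aux

variable (G : Multigraph)

lemma adj_step (v : G.V) (j : Fin (nn G v + 2)) :
    (HH G).toMultigraph.adjGraph.Adj ⟨v, j⟩ ⟨v, j + 1⟩ := by
  refine ⟨fun h => fin_ne_add_one j (sigma_snd G h), .inl ⟨v, j⟩, rfl⟩

lemma reach_zero (v : G.V) (i : Fin (nn G v + 2)) :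
    (HH G).toMultigraph.adjGraph.Reachable ⟨v, i⟩ ⟨v, 0⟩ := by
  obtain ⟨k, hk⟩ := i
  induction k with
  | zero => rfl
  | succ k ih =>
    have hk' : k < nn G v + 2 := by omega
    have h1 := (adj_step G v ⟨k, hk'⟩).reachable
    rw [fin_mk_add_one k hk] at h1
    exact h1.symm.trans (ih hk')

lemma reach_adj {v w : G.V} (h : G.adjGraph.Adj v w) :
    (HH G).toMultigraph.adjGraph.Reachable ⟨v, 0⟩ ⟨w, 0⟩ := by
  obtain ⟨hne, e, he⟩ := h
  rw [← ends_eq_darts G e, Sym2.eq_iff] at he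
  have key : ∀ b : Bool, ∀ hbv : dv G (e, b) = v, ∀ hbw : dv G (e, !b) = w,
      (HH G).toMultigraph.adjGraph.Reachable ⟨v, 0⟩ ⟨w, 0⟩ := by
    intro b hbv hbw
    have hadj : (HH G).toMultigraph.adjGraph.Adj (attach G (e, b)) (attach G (e, !b)) := by
      refine ⟨?_, .inr (.inr e), ?_⟩
      · intro hc
        have h5 : b = !b := congrArg Prod.snd (attach_injective G hc)
        simp at h5
      · show s(attach G (e, false), attach G (e, true)) = _
        cases b
        · rfl
        · exact Sym2.eq_swap
    have e1 : attach G (e, b) = ⟨v, Fin.castAdd 2 (σ G v ⟨(e, b), hbv⟩)⟩ :=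
      (attach_eq_iff G _ _ _).mpr ⟨hbv, rfl⟩
    have e2 : attach G (e, !b) = ⟨w, Fin.castAdd 2 (σ G w ⟨(e, !b), hbw⟩)⟩ :=
      (attach_eq_iff G _ _ _).mpr ⟨hbw, rfl⟩
    have h1 : (HH G).toMultigraph.adjGraph.Reachable ⟨v, 0⟩ (attach G (e, b)) := by
      rw [e1]; exact (reach_zero G v _).symm
    have h2 : (HH G).toMultigraph.adjGraph.Reachable (attach G (e, !b)) ⟨w, 0⟩ := by
      rw [e2]; exact reach_zero G w _
    exact (h1.trans hadj.reachable).trans h2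
  rcases he with ⟨h1, h2⟩ | ⟨h1, h2⟩
  · exact key false h1 h2
  · exact key true h2 h1

lemma reach_lift {v w : G.V} (h : G.adjGraph.Reachable v w) :
    (HH G).toMultigraph.adjGraph.Reachable ⟨v, 0⟩ ⟨w, 0⟩ := by
  obtain ⟨p⟩ := h
  induction p with
  | nil => rfl
  | cons h p ih => exact (reach_adj G h).trans ih

lemma HH_connected (hG : G.Connected) : (HH G).toMultigraph.Connected := by
  rw [Multigraph.Connected, SimpleGraph.connected_iff]
  obtain ⟨v0⟩ := hG.nonempty
  refine ⟨?_, ⟨⟨v0, 0⟩⟩⟩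
  rintro ⟨v, i⟩ ⟨w, j⟩
  exact (reach_zero G v i).trans ((reach_lift G (hG.preconnected v w)).trans (reach_zero G w j).symm)

end Stmt4Aux
namespace Stmt4Aux

variable (G : Multigraph)

lemma mem0 (v : G.V) (i : Fin (nn G v + 2)) :
    (⟨v, i⟩ : HV G) ∈ hends G (.inl ⟨v, i⟩) := Sym2.mem_iff.mpr (Or.inl rfl)

lemma mem1 (v : G.V) (i : Fin (nn G v + 2)) :
    (⟨v, i⟩ : HV G) ∈ hends G (.inl ⟨v, i - 1⟩) := by
  rw [show hends G (.inl ⟨v, i - 1⟩) = s((⟨v, i - 1⟩ : HV G), ⟨v, i - 1 + 1⟩) from rfl,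
    Sym2.mem_iff]
  right
  exact congrArg (Sigma.mk v) (sub_add_cancel i 1).symm

lemma mem_extra (v : G.V) (i : Fin (nn G v + 2)) (h : ¬ i.val < nn G v) :
    (⟨v, i⟩ : HV G) ∈ hends G (.inr (.inl v)) := by
  rw [show hends G (.inr (.inl v)) =
    s((⟨v, ⟨nn G v, by omega⟩⟩ : HV G), ⟨v, ⟨nn G v + 1, by omega⟩⟩) from rfl, Sym2.mem_iff]
  have hi := i.isLt
  rcases Nat.lt_or_ge i.val (nn G v + 1) with h2 | h2
  · left; exact congrArg (Sigma.mk v) (Fin.ext (show i.val = nn G v by omega))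
  · right; exact congrArg (Sigma.mk v) (Fin.ext (show i.val = nn G v + 1 by omega))

lemma real_mem {v : G.V} {i : Fin (nn G v + 2)} {e : G.E}
    (h : (⟨v, i⟩ : HV G) ∈ hends G (.inr (.inr e))) :
    ∃ b, attach G (e, b) = ⟨v, i⟩ := by
  rw [show hends G (.inr (.inr e)) = s(attach G (e, false), attach G (e, true)) from rfl,
    Sym2.mem_iff] at h
  rcases h with h | h
  exacts [⟨false, h.symm⟩, ⟨true, h.symm⟩]

lemma real_det {v : G.V} {i : Fin (nn G v + 2)} {e : G.E} {b : Bool}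
    (h : attach G (e, b) = ⟨v, i⟩) :
    ∃ hlt : i.val < nn G v, ((σ G v).symm ⟨i.val, hlt⟩).1.1 = e := by
  obtain ⟨hb, hc⟩ := (attach_eq_iff G _ _ _).mp h
  have hval : (σ G v ⟨(e, b), hb⟩ : Fin (nn G v)).val = i.val := by
    simpa using congrArg Fin.val hc
  have hlt : i.val < nn G v := hval ▸ (σ G v ⟨(e, b), hb⟩).isLt
  refine ⟨hlt, ?_⟩
  have h1 : σ G v ⟨(e, b), hb⟩ = ⟨i.val, hlt⟩ := Fin.ext hval
  have h2 : (σ G v).symm ⟨i.val, hlt⟩ = ⟨(e, b), hb⟩ := by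
    rw [← h1]; exact Equiv.symm_apply_apply _ _
  rw [h2]

lemma real_mem_of (v : G.V) (i : Fin (nn G v + 2)) (hlt : i.val < nn G v) :
    (⟨v, i⟩ : HV G) ∈ hends G (.inr (.inr (((σ G v).symm ⟨i.val, hlt⟩).1.1))) := by
  set d := (σ G v).symm ⟨i.val, hlt⟩ with hd
  have hda : attach G d.1 = ⟨v, i⟩ := by
    refine (attach_eq_iff G _ _ _).mpr ⟨d.2, ?_⟩
    have h1 : σ G v ⟨d.1, d.2⟩ = ⟨i.val, hlt⟩ := by
      rw [show (⟨d.1, d.2⟩ : Fib G v) = d from rfl, hd]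
      exact Equiv.apply_symm_apply _ _
    rw [h1]
    exact Fin.ext (by simp)
  rw [show hends G (.inr (.inr d.1.1)) = s(attach G (d.1.1, false), attach G (d.1.1, true))
    from rfl, Sym2.mem_iff]
  rcases hb : (d.1 : Dart G).2 with _ | _
  · left
    have hx : ((d.1.1, false) : Dart G) = d.1 := by rw [← hb]
    rw [hx, hda]
  · right
    have hx : ((d.1.1, true) : Dart G) = d.1 := by rw [← hb]
    rw [hx, hda]


open Classical in
lemma third_unique (v : G.V) (i : Fin (nn G v + 2)) (e : HE G)
    (he : (⟨v, i⟩ : HV G) ∈ hends G e)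
    (h0 : e ≠ .inl ⟨v, i⟩) (h1 : e ≠ .inl ⟨v, i - 1⟩) :
    e = if hlt : i.val < nn G v then .inr (.inr (((σ G v).symm ⟨i.val, hlt⟩).1.1))
      else .inr (.inl v) := by
  cases e with
  | inl p =>
    obtain ⟨w, j⟩ := p
    rw [show hends G (.inl ⟨w, j⟩) = s((⟨w, j⟩ : HV G), ⟨w, j + 1⟩) from rfl,
      Sym2.mem_iff] at he
    rcases he with h | h
    · have hw : v = w := sigma_fst G h
      subst hw
      exact absurd (congrArg Sum.inl (congrArg (Sigma.mk v) (sigma_snd G h)).symm) h0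
    · have hw : v = w := sigma_fst G h
      subst hw
      have hji : j = i - 1 := eq_sub_of_add_eq (sigma_snd G h).symm
      exact absurd (congrArg Sum.inl (congrArg (Sigma.mk v) hji)) h1
  | inr f =>
    cases f with
    | inl w =>
      rw [show hends G (.inr (.inl w)) =
        s((⟨w, ⟨nn G w, by omega⟩⟩ : HV G), ⟨w, ⟨nn G w + 1, by omega⟩⟩) from rfl,
        Sym2.mem_iff] at he
      rcases he with h | h
      · have hw : v = w := sigma_fst G h
        subst hw
        have := congrArg Fin.val (sigma_snd G h)
        simp only at this
        rw [dif_neg (by omega)]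
      · have hw : v = w := sigma_fst G h
        subst hw
        have := congrArg Fin.val (sigma_snd G h)
        simp only at this
        rw [dif_neg (by omega)]
    | inr ε =>
      obtain ⟨b, hb⟩ := real_mem G he
      obtain ⟨hlt, hε⟩ := real_det G hb
      rw [dif_pos hlt, hε]

end Stmt4Aux
namespace Stmt4Aux

variable (G : Multigraph)

lemma ne01 (v : G.V) (i : Fin (nn G v + 2)) :
    (Sum.inl ⟨v, i⟩ : HE G) ≠ Sum.inl ⟨v, i - 1⟩ := by
  intro h
  exact fin_sub_one_ne i (sigma_snd G (Sum.inl.inj h)).symm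

lemma card_three (v : G.V) (i : Fin (nn G v + 2)) :
    Nat.card {e : HE G // (⟨v, i⟩ : HV G) ∈ hends G e} = 3 := by
  classical
  set C : HE G := if hlt : i.val < nn G v then .inr (.inr (((σ G v).symm ⟨i.val, hlt⟩).1.1))
    else .inr (.inl v) with hC
  have hmemC : (⟨v, i⟩ : HV G) ∈ hends G C := by
    rw [hC]; split_ifs with hlt
    · exact real_mem_of G v i hlt
    · exact mem_extra G v i hlt
  have hCne : ∀ w : HV G, C ≠ .inl w := by
    intro w; rw [hC]; split_ifs <;> simp
  have hset : {e : HE G | (⟨v, i⟩ : HV G) ∈ hends G e} =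
      {Sum.inl ⟨v, i⟩, Sum.inl ⟨v, i - 1⟩, C} := by
    ext e
    simp only [Set.mem_setOf_eq, Set.mem_insert_iff, Set.mem_singleton_iff]
    constructor
    · intro he
      by_cases h0 : e = .inl ⟨v, i⟩
      · exact Or.inl h0
      · by_cases h1 : e = .inl ⟨v, i - 1⟩
        · exact Or.inr (Or.inl h1)
        · exact Or.inr (Or.inr ((third_unique G v i e he h0 h1).trans hC.symm))
    · rintro (rfl | rfl | rfl)
      exacts [mem0 G v i, mem1 G v i, hmemC]
  have h2 : Nat.card {e : HE G // (⟨v, i⟩ : HV G) ∈ hends G e} =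
      Set.ncard {e : HE G | (⟨v, i⟩ : HV G) ∈ hends G e} := Nat.card_coe_set_eq _
  rw [h2, hset]
  exact Set.ncard_eq_three.mpr ⟨_, _, _, ne01 G v i, fun h => hCne _ h.symm,
    fun h => hCne _ h.symm, rfl⟩

lemma HH_regular : (HH G).toMultigraph.IsRegular 3 := by
  rintro ⟨v, i⟩
  exact card_three G v i

end Stmt4Aux
namespace Stmt4Aux

variable (G : Multigraph)

lemma vrel_fst {a b : HV G} (h : (HH G).virtualRel a b) : a.1 = b.1 := by
  obtain ⟨e, hf, he⟩ := h
  cases e with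
  | inl p =>
    obtain ⟨w, j⟩ := p
    rw [show (HH G).toMultigraph.ends (.inl ⟨w, j⟩) = s((⟨w, j⟩ : HV G), ⟨w, j + 1⟩) from rfl,
      Sym2.eq_iff] at he
    rcases he with ⟨h1, h2⟩ | ⟨h1, h2⟩ <;> rw [← h1, ← h2]
  | inr f =>
    cases f with
    | inl w =>
      rw [show (HH G).toMultigraph.ends (.inr (.inl w)) =
        s((⟨w, ⟨nn G w, by omega⟩⟩ : HV G), ⟨w, ⟨nn G w + 1, by omega⟩⟩) from rfl,
        Sym2.eq_iff] at he
      rcases he with ⟨h1, h2⟩ | ⟨h1, h2⟩ <;> rw [← h1, ← h2]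
    | inr ε => exact Bool.noConfusion hf

noncomputable def vE : Quot (HH G).virtualRel ≃ G.V where
  toFun := Quot.lift Sigma.fst (fun _ _ h => vrel_fst G h)
  invFun := fun v => Quot.mk _ ⟨v, 0⟩
  left_inv := by
    apply Quot.ind
    rintro ⟨v, i⟩
    exact (quot_mk_eq_zero G v i).symm
  right_inv := fun v => rfl

noncomputable def eE : {e : HE G // hreal G e = true} ≃ G.E where
  toFun := fun x => match x with
    | ⟨.inr (.inr ε), _⟩ => ε
    | ⟨.inl _, h⟩ => nomatch h
    | ⟨.inr (.inl _), h⟩ => nomatch h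
  invFun := fun ε => ⟨.inr (.inr ε), rfl⟩
  left_inv := fun x => match x with
    | ⟨.inr (.inr ε), _⟩ => rfl
    | ⟨.inl _, h⟩ => nomatch h
    | ⟨.inr (.inl _), h⟩ => nomatch h
  right_inv := fun ε => rfl

noncomputable def theIso : (HH G).reduce.Iso G where
  vEquiv := vE G
  eEquiv := eE G
  ends_map := by
    rintro ⟨e, he⟩
    cases e with
    | inl p => exact nomatch he
    | inr f =>
      cases f with
      | inl w => exact nomatch he
      | inr ε =>
        show G.ends ε =
          Sym2.map (vE G) (Sym2.map (Quot.mk _) (hends G (.inr (.inr ε))))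
        rw [show hends G (.inr (.inr ε)) = s(attach G (ε, false), attach G (ε, true)) from rfl,
          Sym2.map_pair_eq, Sym2.map_pair_eq, ← ends_eq_darts G ε]
        rfl

end Stmt4Aux

/-- **Surjectivity of the reduction map onto connected multigraphs.**
Every connected multigraph (possibly with loops, multi-edges and vertices of any degree) is
obtained, up to isomorphism, by reducing some connected, loopless, 3-regular labelled
multigraph. -/
theorem stmt4 (G : Multigraph) (hG : G.Connected) :
    ∃ H : LabelledMultigraph,
      H.toMultigraph.Connected ∧ H.toMultigraph.Loopless ∧ H.toMultigraph.IsRegular 3 ∧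
      Nonempty (H.reduce.Iso G) := by
  exact ⟨Stmt4Aux.HH G, Stmt4Aux.HH_connected G hG, Stmt4Aux.HH_loopless G,
    Stmt4Aux.HH_regular G, ⟨Stmt4Aux.theIso G⟩⟩
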